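/- For every entire function f : ℂ → ℂ, every z ∈ ℂ with |z| ≤ 1, and every n ∈ ℕ, the n-th derivative satisfies |f^(n)(z)| ≤ n! · e^{3/2} · e^{|z|²/2} · sup_{w ∈ ℂ} |f(w)| e^{-|w|²/2}, provided that supremum is finite. -/

import Mathlib

set_option maxHeartbeats 800000

open Complex Real

/-- Pointwise derivative estimate on the closed unit disc for entire functions with
finite Fock growth norm. -/
theorem stmt_0 (f : ℂ → ℂ) (hf : Differentiable ℂ f)
    (hbdd : BddAbove (Set.range fun w : ℂ =>
      ‖f w‖ * Real.exp (-(‖w‖) ^ 2 / 2)))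
    (z : ℂ) (hz : ‖z‖ ≤ 1) (n : ℕ) :
    ‖iteratedDeriv n f z‖ ≤
      (n.factorial : ℝ) * Real.exp (3 / 2) * Real.exp ((‖z‖) ^ 2 / 2) *
        ⨆ w : ℂ, ‖f w‖ * Real.exp (-(‖w‖) ^ 2 / 2) := by
  set M := ⨆ w : ℂ, ‖f w‖ * Real.exp (-(‖w‖) ^ 2 / 2) with hM
  have hMub : ∀ w : ℂ, ‖f w‖ * Real.exp (-(‖w‖) ^ 2 / 2) ≤ M :=
    fun w => le_ciSup hbdd w
  have hM0 : 0 ≤ M := le_trans (by positivity) (hMub 0)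
  -- pointwise bound |f w| ≤ M * exp(|w|²/2)
  have hfw : ∀ w : ℂ, ‖f w‖ ≤ M * Real.exp ((‖w‖) ^ 2 / 2) := by
    intro w
    have h1 := hMub w
    calc ‖f w‖
        = (‖f w‖ * Real.exp (-(‖w‖) ^ 2 / 2)) *
            Real.exp ((‖w‖) ^ 2 / 2) := by
          rw [mul_assoc, ← Real.exp_add, neg_div, neg_add_cancel, Real.exp_zero, mul_one]
      _ ≤ M * Real.exp ((‖w‖) ^ 2 / 2) :=
          mul_le_mul_of_nonneg_right h1 (Real.exp_pos _).le
  set B := Real.exp (3 / 2) * Real.exp ((‖z‖) ^ 2 / 2) * M with hB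
  have hB0 : 0 ≤ B := by positivity
  -- bound on circle of radius 1 around z
  have hcirc : ∀ θ : ℝ, ‖f (circleMap z 1 θ)‖ ≤ B := by
    intro θ
    have hw : ‖circleMap z 1 θ‖ ≤ ‖z‖ + 1 := by
      have : ‖circleMap z 1 θ - z‖ = 1 := by
        simp [circleMap, Complex.norm_exp]
      calc ‖circleMap z 1 θ‖
          = ‖z + (circleMap z 1 θ - z)‖ := by ring_nf
        _ ≤ ‖z‖ + ‖circleMap z 1 θ - z‖ := norm_add_le _ _
        _ = ‖z‖ + 1 := by rw [this]
    have hsq : (‖circleMap z 1 θ‖) ^ 2 / 2 ≤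
        3 / 2 + (‖z‖) ^ 2 / 2 := by
      nlinarith [norm_nonneg (circleMap z 1 θ), norm_nonneg z]
    calc ‖f (circleMap z 1 θ)‖
        ≤ M * Real.exp ((‖circleMap z 1 θ‖) ^ 2 / 2) := hfw _
      _ ≤ M * Real.exp (3 / 2 + (‖z‖) ^ 2 / 2) :=
          mul_le_mul_of_nonneg_left (Real.exp_le_exp.2 hsq) hM0
      _ = B := by rw [hB, Real.exp_add]; ring
  -- power series
  have hps := hf.differentiableOn.hasFPowerSeriesOnBall (R := 1) (c := z) one_pos
  have hfact := hps.factorial_smul (1 : ℂ) n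
  simp only [NNReal.coe_one] at hfact
  have hiter : iteratedDeriv n f z = iteratedFDeriv ℂ n f z fun _ => 1 :=
    iteratedDeriv_eq_iteratedFDeriv
  -- coefficient bound
  have hcoef : ‖cauchyPowerSeries f z (1:ℝ) n‖ ≤ B := by
    refine (norm_cauchyPowerSeries_le f z 1 n).trans ?_
    have hint : (∫ θ : ℝ in (0)..2 * π, ‖f (circleMap z 1 θ)‖) ≤ 2 * π * B := by
      have : (∫ θ : ℝ in (0)..2 * π, ‖f (circleMap z 1 θ)‖) ≤
          ∫ _ : ℝ in (0)..2 * π, B := by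
        apply intervalIntegral.integral_mono_on Real.two_pi_pos.le
        · exact ((hf.continuous.norm).comp (continuous_circleMap _ _)).intervalIntegrable _ _
        · exact intervalIntegrable_const
        · intro θ _; exact hcirc θ
      rw [intervalIntegral.integral_const, smul_eq_mul, sub_zero] at this
      exact this
    have : (2 * π)⁻¹ * (∫ θ : ℝ in (0)..2 * π, ‖f (circleMap z 1 θ)‖) ≤ B := by
      rw [inv_mul_le_iff₀ Real.two_pi_pos]
      linarith [hint]
    simpa using this
  -- combine
  have key : ‖iteratedDeriv n f z‖ ≤ (n.factorial : ℝ) * B := by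
    rw [hiter, ← hfact]
    rw [nsmul_eq_mul, norm_mul, Complex.norm_natCast]
    refine mul_le_mul_of_nonneg_left ?_ (by positivity)
    calc ‖cauchyPowerSeries f z (1:ℝ) n fun _ => (1:ℂ)‖
        ≤ ‖cauchyPowerSeries f z (1:ℝ) n‖ * ∏ _i : Fin n, ‖(1:ℂ)‖ :=
          (cauchyPowerSeries f z (1:ℝ) n).le_opNorm _
      _ = ‖cauchyPowerSeries f z (1:ℝ) n‖ := by simp
      _ ≤ B := hcoef
  calc ‖iteratedDeriv n f z‖ ≤ (n.factorial : ℝ) * B := key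
    _ = (n.factorial : ℝ) * Real.exp (3 / 2) * Real.exp ((‖z‖) ^ 2 / 2) * M := by
        rw [hB]; ring
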